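/- Let 0 < λ < μ < 1 and A_{−λ,μ} = { (Σ_{i≥0} a_i(−λ)^i, Σ_{i≥0} a_i μ^i) : a_i ∈ {−1,+1} }. Then the line through π(p^∞) = (1/(1+λ), 1/(1−μ)) with slope −μ/λ is a support line of A_{−λ,μ}: every point (x,y) ∈ A_{−λ,μ} satisfies y − 1/(1−μ) ≤ −(μ/λ)(x − 1/(1+λ)) whenever x ≤ 1/(1+λ), and y ≤ 1/(1−μ) always. -/

import Mathlib

theorem support_line_mixed_real (lam mu : ℝ) (h0 : 0 < lam) (h1 : lam < mu) (h2 : mu < 1)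
    (a : ℕ → ℝ) (ha : ∀ i, a i = 1 ∨ a i = -1)
    (x y : ℝ) (hx : x = ∑' i : ℕ, a i * (-lam) ^ i) (hy : y = ∑' i : ℕ, a i * mu ^ i) :
    y ≤ 1 / (1 - mu) ∧
    (x ≤ 1 / (1 + lam) →
      y - 1 / (1 - mu) ≤ -(mu / lam) * (x - 1 / (1 + lam))) := by
  have hmu0 : 0 < mu := h0.trans h1
  have hlam1 : lam < 1 := h1.trans h2
  have hnorm_mu : ‖mu‖ < 1 := by rw [Real.norm_eq_abs, abs_of_pos hmu0]; exact h2
  have hnorm_lam : ‖(-lam)‖ < 1 := by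
    rw [Real.norm_eq_abs, abs_neg, abs_of_pos h0]; exact hlam1
  have hgmu : Summable (fun i : ℕ => mu ^ i) := summable_geometric_of_norm_lt_one hnorm_mu
  have hglam : Summable (fun i : ℕ => (-lam) ^ i) := summable_geometric_of_norm_lt_one hnorm_lam
  have hanorm : ∀ i, ‖a i‖ = 1 := by
    intro i; rcases ha i with h | h <;> simp [h]
  have hsmu : Summable (fun i : ℕ => a i * mu ^ i) := by
    apply Summable.of_norm_bounded (g := fun i : ℕ => mu ^ i) (by simpa using hgmu.norm)
    intro i
    simp [norm_mul, hanorm i, abs_of_pos hmu0, le_of_eq, abs_pow]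
  have hslam : Summable (fun i : ℕ => a i * (-lam) ^ i) := by
    apply Summable.of_norm_bounded (g := fun i : ℕ => lam ^ i)
      (by simpa [abs_of_pos h0] using hglam.norm)
    intro i
    simp [norm_mul, hanorm i, abs_pow, abs_of_pos h0, le_of_eq]
  have hy_le : y ≤ 1 / (1 - mu) := by
    rw [hy]
    have := Summable.tsum_le_tsum (f := fun i : ℕ => a i * mu ^ i) (g := fun i : ℕ => mu ^ i)
      (fun i => by
        have hp : (0:ℝ) ≤ mu ^ i := pow_nonneg hmu0.le i
        rcases ha i with h | h <;> simp only [h] <;> nlinarith) hsmu hgmu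
    rwa [tsum_geometric_of_lt_one hmu0.le h2, ← one_div] at this
  refine ⟨hy_le, fun _ => ?_⟩
  -- key inequality: y + (mu/lam) * x ≤ 1/(1-mu) + (mu/lam) * (1/(1+lam))
  have hc_nonneg : ∀ i : ℕ, 0 ≤ mu ^ i + (mu / lam) * (-lam) ^ i := by
    intro i
    rcases Nat.even_or_odd i with he | ho
    · rw [he.neg_pow]
      have : 0 ≤ lam ^ i := pow_nonneg h0.le i
      have : 0 ≤ mu ^ i := pow_nonneg hmu0.le i
      positivity
    · obtain ⟨k, rfl⟩ := ho
      have hpow : lam ^ (2*k) ≤ mu ^ (2*k) :=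
        pow_le_pow_left₀ h0.le h1.le _
      have : (-lam) ^ (2*k+1) = -lam ^ (2*k+1) := by
        rw [neg_pow]; simp [pow_succ]
      rw [this]
      have hlamne : lam ≠ 0 := h0.ne'
      have : mu / lam * lam ^ (2*k+1) = mu * lam ^ (2*k) := by
        field_simp; ring
      rw [pow_succ mu]
      nlinarith [pow_nonneg hmu0.le (2*k), pow_nonneg h0.le (2*k)]
  have hsc : Summable (fun i : ℕ => mu ^ i + (mu / lam) * (-lam) ^ i) :=
    hgmu.add (hglam.mul_left _)
  have hsac : Summable (fun i : ℕ => a i * (mu ^ i + (mu / lam) * (-lam) ^ i)) := by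
    have := hsmu.add ((hslam.mul_left (mu / lam)))
    convert this using 2 with i
    ring
  have key : y + (mu / lam) * x ≤ 1 / (1 - mu) + (mu / lam) * (1 / (1 + lam)) := by
    have hterm : ∀ i, a i * (mu ^ i + (mu / lam) * (-lam) ^ i)
        ≤ mu ^ i + (mu / lam) * (-lam) ^ i := by
      intro i
      have := hc_nonneg i
      rcases ha i with h | h <;> simp only [h] <;> nlinarith
    have hle := Summable.tsum_le_tsum hterm hsac hsc
    have heq1 : (∑' i : ℕ, a i * (mu ^ i + (mu / lam) * (-lam) ^ i))
        = y + (mu / lam) * x := by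
      rw [hy, hx]
      rw [show (fun i : ℕ => a i * (mu ^ i + (mu / lam) * (-lam) ^ i))
          = fun i : ℕ => a i * mu ^ i + (mu / lam) * (a i * (-lam) ^ i) by
            funext i; ring]
      rw [Summable.tsum_add hsmu (hslam.mul_left _), tsum_mul_left]
    have heq2 : (∑' i : ℕ, (mu ^ i + (mu / lam) * (-lam) ^ i))
        = 1 / (1 - mu) + (mu / lam) * (1 / (1 + lam)) := by
      rw [Summable.tsum_add hgmu (hglam.mul_left _), tsum_mul_left,
        tsum_geometric_of_lt_one hmu0.le h2,
        tsum_geometric_of_norm_lt_one hnorm_lam]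
      ring_nf
    rw [heq1, heq2] at hle
    exact hle
  nlinarith [key]
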